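/- If binary strings s_1, …, s_k over the alphabet {1,2} have a common supersequence of length at most l, then the 3 × n board B constructed from these strings (with gadgets G_i encoding each s_i and terminal rectangle R) can be flooded, always playing at the top-left square, in at most 2l + 3 moves, via the move sequence a_1 3 a_2 3 … a_l 3 4 2 1 where a_1…a_l is a common supersequence of length l. -/

import Mathlib

namespace Flood

variable {V C : Type*}

/-- Two vertices are joined by an edge inside a monochromatic class. -/
def monoAdj (G : SimpleGraph V) (ω : V → C) (a b : V) : Prop :=
  G.Adj a b ∧ ω a = ω b

/-- `u` and `v` lie in a common monochromatic component of the colouring `ω`. -/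
def monoLinked (G : SimpleGraph V) (ω : V → C) (u v : V) : Prop :=
  Relation.ReflTransGen (monoAdj G ω) u v

/-- One flooding move: recolour the monochromatic component of `v` with colour `d`. -/
noncomputable def floodMove (G : SimpleGraph V) (ω : V → C) (v : V) (d : C) : V → C :=
  fun u => @ite _ (monoLinked G ω v u) (Classical.propDecidable _) d (ω u)

/-- Apply a sequence of flooding moves. -/
noncomputable def floodSeq (G : SimpleGraph V) (ω : V → C) (S : List (V × C)) : V → C :=
  S.foldl (fun ω' m => floodMove G ω' m.1 m.2) ω

/-- The sequence `S` floods `G`, i.e. makes it monochromatic. -/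
def Floods (G : SimpleGraph V) (ω : V → C) (S : List (V × C)) : Prop :=
  ∀ a b, floodSeq G ω S a = floodSeq G ω S b

/-- Minimum number of moves needed to make `G` monochromatic. -/
noncomputable def floodCost (G : SimpleGraph V) (ω : V → C) : ℕ :=
  sInf {k | ∃ S, S.length = k ∧ Floods G ω S}

/-- Minimum number of moves needed to make `G` monochromatic in colour `d`. -/
noncomputable def floodCostIn (G : SimpleGraph V) (ω : V → C) (d : C) : ℕ :=
  sInf {k | ∃ S, S.length = k ∧ ∀ a, floodSeq G ω S a = d}

/-- The sequence `S` links `u` and `v`. -/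
def Links (G : SimpleGraph V) (ω : V → C) (S : List (V × C)) (u v : V) : Prop :=
  monoLinked G (floodSeq G ω S) u v

/-- Minimum number of moves needed to link `u` and `v`. -/
noncomputable def linkCost (G : SimpleGraph V) (ω : V → C) (u v : V) : ℕ :=
  sInf {k | ∃ S, S.length = k ∧ Links G ω S u v}

/-- Minimum number of moves needed to link `u` and `v` in a monochromatic
component of colour `d`. -/
noncomputable def linkCostIn (G : SimpleGraph V) (ω : V → C) (u v : V) (d : C) : ℕ :=
  sInf {k | ∃ S, S.length = k ∧ Links G ω S u v ∧ floodSeq G ω S u = d}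


/-- Apply a sequence of moves of the fixed game, each played at the fixed
vertex `t` (the top-left square). -/
noncomputable def fixedSeq (G : SimpleGraph V) (ω : V → C) (t : V)
    (M : List C) : V → C :=
  M.foldl (fun ω' d => floodMove G ω' t d) ω

/-- The `k × n` grid graph (squares adjacent horizontally or vertically). -/
def gridGraph (k n : ℕ) : SimpleGraph (Fin k × Fin n) :=
  SimpleGraph.fromRel (fun a b =>
    (a.1 = b.1 ∧ a.2.val + 1 = b.2.val) ∨ (a.2 = b.2 ∧ a.1.val + 1 = b.1.val))

end Flood

namespace FloodBoard

/-- A column of a height-3 board: the colours of its top, middle and bottom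
squares.  Colours `0,1,2,3` stand for the colours `1,2,3,4` of the paper. -/
abbrev Col := Fin 4 × Fin 4 × Fin 4

/-- The embedding of the binary alphabet `{1,2}` into the colour set. -/
def ch (a : Fin 2) : Fin 4 := Fin.castLE (by omega) a

/-- The columns of the gadget `G_i` for the string `s`: the top row lies in the
colour-3 background, the middle row is colour 4, and the bottom row alternates
colour 3 with the characters of `s` (read from the right), so that the bottom
row can only be flooded sequentially from the right, spelling out `s`. -/
def gadgetCols (s : List (Fin 2)) : List Col :=
  (s.reverse.flatMap fun a => [((2 : Fin 4), 3, 2), ((2 : Fin 4), 3, ch a)]) ++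
    [((2 : Fin 4), 3, 2)]

/-- The columns of the terminal rectangle `R`: `l` pairs of a choice column
(colours 1,2,1) and a colour-3 column, followed by full columns of colours
4, 2 and 1; in total `2l+3` columns. -/
def rCols (l : ℕ) : List Col :=
  (List.replicate l [((0 : Fin 4), 1, 0), ((2 : Fin 4), 2, 2)]).flatten ++
    [((3 : Fin 4), 3, 3), ((1 : Fin 4), 1, 1), ((0 : Fin 4), 0, 0)]

/-- The columns of the board `B` built from the strings in `L` and the bound
`l`: the gadgets, each followed by a separating colour-3 column, and then the
rectangle `R` at the right-hand end. -/
def boardCols (L : List (List (Fin 2))) (l : ℕ) : List Col :=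
  (L.flatMap fun s => gadgetCols s ++ [((2 : Fin 4), 2, 2)]) ++ rCols l

lemma boardCols_pos (L : List (List (Fin 2))) (l : ℕ) :
    0 < (boardCols L l).length := by
  simp [boardCols, rCols]

/-- The colouring of the board `B` as a `3 × n` grid. -/
def boardColouring (L : List (List (Fin 2))) (l : ℕ) :
    Fin 3 × Fin (boardCols L l).length → Fin 4 :=
  fun x =>
    let c := (boardCols L l).get x.2
    if x.1 = 0 then c.1 else if x.1 = 1 then c.2.1 else c.2.2

/-- The top-left square of the board. -/
def topLeft (L : List (List (Fin 2))) (l : ℕ) :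
    Fin 3 × Fin (boardCols L l).length :=
  ((0 : Fin 3), ⟨0, boardCols_pos L l⟩)

end FloodBoard

namespace FloodProof
open Flood

variable {V C : Type*} (G : SimpleGraph V) (ω : V → C) (t : V)

/-- Territory: the monochromatic component of `t` after playing moves `M`. -/
def terr (M : List C) : Set V := {u | monoLinked G (fixedSeq G ω t M) t u}

/-- One static reach step: everything reachable from `S` through cells of
original colour `d`. -/
def reach (d : C) (S : Set V) : Set V :=
  {v | ∃ u ∈ S, Relation.ReflTransGen (fun a b => G.Adj a b ∧ ω b = d) u v}

lemma fixedSeq_append (M : List C) (d : C) :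
    fixedSeq G ω t (M ++ [d]) = floodMove G (fixedSeq G ω t M) t d := by
  simp [fixedSeq, List.foldl_append]

lemma monoLinked_colour {ω' : V → C} {u v : V} (h : monoLinked G ω' u v) :
    ω' u = ω' v := by
  induction h with
  | refl => rfl
  | tail _ hbc ih => exact ih.trans hbc.2

lemma self_mem_terr (M : List C) : t ∈ terr G ω t M := Relation.ReflTransGen.refl

lemma terr_mono (M : List C) (d : C) : terr G ω t M ⊆ terr G ω t (M ++ [d]) := by
  intro u hu
  unfold terr at *
  rw [Set.mem_setOf_eq, monoLinked, fixedSeq_append] at *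
  set ω1 := fixedSeq G ω t M with hω1
  induction hu with
  | refl => exact Relation.ReflTransGen.refl
  | @tail b c hb hbc ih =>
    refine ih.tail ⟨hbc.1, ?_⟩
    have hbt : monoLinked G ω1 t b := hb
    have hct : monoLinked G ω1 t c := hb.tail hbc
    simp only [floodMove, if_pos hbt, if_pos hct]

lemma fixedSeq_of_not_mem_terr (M : List C) {u : V} (hu : u ∉ terr G ω t M) :
    fixedSeq G ω t M u = ω u := by
  induction M using List.reverseRecOn with
  | nil => rfl
  | append_singleton M d ih =>
    have hM : u ∉ terr G ω t M := fun h => hu (terr_mono G ω t M d h)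
    rw [fixedSeq_append]
    have h1 : ¬ monoLinked G (fixedSeq G ω t M) t u := hM
    simp only [floodMove, if_neg h1]
    exact ih hM

lemma fixedSeq_of_mem_terr (M : List C) (d : C) {u : V}
    (hu : u ∈ terr G ω t (M ++ [d])) : fixedSeq G ω t (M ++ [d]) u = d := by
  have h1 : fixedSeq G ω t (M ++ [d]) t = d := by
    rw [fixedSeq_append]
    simp only [floodMove,
      if_pos (show monoLinked G (fixedSeq G ω t M) t t from Relation.ReflTransGen.refl)]
  have := monoLinked_colour G (hu : monoLinked G _ t u)
  rw [← this, h1]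

lemma terr_absorb (M : List C) (d : C) {u v : V} (hu : u ∈ terr G ω t M)
    (hc : Relation.ReflTransGen (fun a b => G.Adj a b ∧ ω b = d) u v) :
    v ∈ terr G ω t (M ++ [d]) := by
  induction hc with
  | refl => exact terr_mono G ω t M d hu
  | @tail b c hb hbc ih =>
    have hbmem : b ∈ terr G ω t (M ++ [d]) := ih
    have hb' : fixedSeq G ω t (M ++ [d]) b = d := fixedSeq_of_mem_terr G ω t M d hbmem
    have hc' : fixedSeq G ω t (M ++ [d]) c = d := by
      by_cases hcm : c ∈ terr G ω t M
      · exact fixedSeq_of_mem_terr G ω t M d (terr_mono G ω t M d hcm)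
      · rw [fixedSeq_append]
        have h1 : ¬ monoLinked G (fixedSeq G ω t M) t c := hcm
        simp only [floodMove, if_neg h1]
        rw [fixedSeq_of_not_mem_terr G ω t M hcm]
        exact hbc.2
    exact hbmem.tail ⟨hbc.1, hb'.trans hc'.symm⟩

lemma reach_subset_terr {S : Set V} (hS : S ⊆ terr G ω t []) :
    ∀ ds : List C, ds.foldl (fun S d => reach G ω d S) S ⊆ terr G ω t ds := by
  intro ds
  induction ds using List.reverseRecOn with
  | nil => simpa using hS
  | append_singleton ds d ih =>
    rw [List.foldl_append]
    rintro v ⟨u, hu, hchain⟩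
    exact terr_absorb G ω t ds d (ih hu) hchain

lemma initial_reach_subset {d : C} (hd : ω t = d) :
    reach G ω d {t} ⊆ terr G ω t [] := by
  rintro v ⟨u, hu, hchain⟩
  rcases hu with rfl
  induction hchain with
  | refl => exact Relation.ReflTransGen.refl
  | @tail b c hb hbc ih =>
    have hωb : ω b = ω u := (monoLinked_colour G ih).symm
    exact ih.tail ⟨hbc.1, show ω b = ω c by rw [hωb, hd, hbc.2]⟩

lemma subset_reach (d : C) (S : Set V) : S ⊆ reach G ω d S :=
  fun u hu => ⟨u, hu, Relation.ReflTransGen.refl⟩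

lemma reach_mono (d : C) {S S' : Set V} (h : S ⊆ S') : reach G ω d S ⊆ reach G ω d S' := by
  rintro v ⟨u, hu, hc⟩; exact ⟨u, h hu, hc⟩

lemma subset_foldl_reach (S : Set V) (ds : List C) :
    S ⊆ ds.foldl (fun S d => reach G ω d S) S := by
  induction ds generalizing S with
  | nil => exact subset_refl _
  | cons d ds ih => exact (subset_reach G ω d S).trans (ih _)

lemma foldl_reach_mono (ds : List C) {S S' : Set V} (h : S ⊆ S') :
    ds.foldl (fun S d => reach G ω d S) S ⊆ ds.foldl (fun S d => reach G ω d S) S' := by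
  induction ds generalizing S S' with
  | nil => exact h
  | cons d ds ih => exact ih (reach_mono G ω d h)

lemma mem_reach_of_chain {d : C} {S : Set V} {u v : V} (hu : u ∈ S)
    (hc : Relation.ReflTransGen (fun a b => G.Adj a b ∧ ω b = d) u v) :
    v ∈ reach G ω d S := ⟨u, hu, hc⟩

/-- Endgame wrap-up: if every cell of original colour ≠ `z` lies in the
territory after `ds`, then playing `ds ++ [z]` makes everything colour `z`. -/
lemma final_constant {z : C} (ds : List C)
    (hcov : ∀ u, ω u ≠ z → u ∈ terr G ω t ds) :
    ∀ u, fixedSeq G ω t (ds ++ [z]) u = z := by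
  intro u
  by_cases hu : u ∈ terr G ω t ds
  · exact fixedSeq_of_mem_terr G ω t ds z (terr_mono G ω t ds z hu)
  · rw [fixedSeq_append]
    have h1 : ¬ monoLinked G (fixedSeq G ω t ds) t u := hu
    simp only [floodMove, if_neg h1]
    rw [fixedSeq_of_not_mem_terr G ω t ds hu]
    by_contra hne
    exact hu (hcov u hne)

end FloodProof
namespace FloodProof
open Flood FloodBoard

/-- Select the colour of row `r` from a column. -/
def sel (r : Fin 3) (c : Col) : Fin 4 :=
  if r = 0 then c.1 else if r = 1 then c.2.1 else c.2.2

def sepCol : Col := ((2 : Fin 4), 2, 2)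

def Gcols (L : List (List (Fin 2))) : List Col :=
  L.flatMap fun s => gadgetCols s ++ [sepCol]

lemma boardCols_eq (L : List (List (Fin 2))) (l : ℕ) :
    boardCols L l = Gcols L ++ rCols l := rfl

lemma boardColouring_eq (L : List (List (Fin 2))) (l : ℕ) (x) :
    boardColouring L l x = sel x.1 ((boardCols L l).get x.2) := by
  rcases x with ⟨r, j⟩
  unfold boardColouring sel
  rfl

lemma length_flat2 {α β : Type*} (f g : α → β) (xs : List α) :
    (xs.flatMap fun a => [f a, g a]).length = 2 * xs.length := by
  induction xs with
  | nil => simp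
  | cons x xs ih => simp [ih]; omega

lemma gadgetCols_length (s : List (Fin 2)) :
    (gadgetCols s).length = 2 * s.length + 1 := by
  unfold gadgetCols
  rw [List.length_append, length_flat2]
  simp

lemma rCols_succ (l : ℕ) :
    rCols (l + 1) = ((0 : Fin 4), 1, 0) :: ((2 : Fin 4), 2, 2) :: rCols l := by
  simp [rCols, List.replicate_succ]

lemma rCols_length (l : ℕ) : (rCols l).length = 2 * l + 3 := by
  induction l with
  | zero => simp [rCols]
  | succ l ih => rw [rCols_succ]; simp [ih]; omega

lemma boardCols_length (L : List (List (Fin 2))) (l : ℕ) :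
    (boardCols L l).length = (Gcols L).length + (2 * l + 3) := by
  rw [boardCols_eq, List.length_append, rCols_length]

lemma rCols_get_C {l i : ℕ} (h : i < l) : (rCols l)[2 * i]? = some (0, 1, 0) := by
  induction l generalizing i with
  | zero => omega
  | succ l ih =>
    rw [rCols_succ]
    rcases i with _ | i
    · rfl
    · have h2 : 2 * (i + 1) = (2 * i) + 1 + 1 := by ring
      rw [h2, List.getElem?_cons_succ, List.getElem?_cons_succ]
      exact ih (by omega)

lemma rCols_get_S {l i : ℕ} (h : i < l) : (rCols l)[2 * i + 1]? = some (2, 2, 2) := by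
  induction l generalizing i with
  | zero => omega
  | succ l ih =>
    rw [rCols_succ]
    rcases i with _ | i
    · simp
    · have h2 : 2 * (i + 1) + 1 = (2 * i + 1) + 1 + 1 := by ring
      rw [h2, List.getElem?_cons_succ, List.getElem?_cons_succ]
      exact ih (by omega)

lemma rCols_get_3 (l : ℕ) : (rCols l)[2 * l]? = some (3, 3, 3) := by
  induction l with
  | zero => rfl
  | succ l ih =>
    rw [rCols_succ]
    have h2 : 2 * (l + 1) = (2 * l) + 1 + 1 := by ring
    rw [h2, List.getElem?_cons_succ, List.getElem?_cons_succ]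
    exact ih

lemma rCols_get_1 (l : ℕ) : (rCols l)[2 * l + 1]? = some (1, 1, 1) := by
  induction l with
  | zero => rfl
  | succ l ih =>
    rw [rCols_succ]
    have h2 : 2 * (l + 1) + 1 = (2 * l + 1) + 1 + 1 := by ring
    rw [h2, List.getElem?_cons_succ, List.getElem?_cons_succ]
    exact ih

lemma rCols_get_0 (l : ℕ) : (rCols l)[2 * l + 2]? = some (0, 0, 0) := by
  induction l with
  | zero => rfl
  | succ l ih =>
    rw [rCols_succ]
    have h2 : 2 * (l + 1) + 2 = (2 * l + 2) + 1 + 1 := by ring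
    rw [h2, List.getElem?_cons_succ, List.getElem?_cons_succ]
    exact ih

lemma flat2_get_even {α : Type*} (f g : α → Col) (xs : List α) (r : ℕ) :
    (xs.flatMap fun a => [f a, g a])[2 * r]? = (xs[r]?).map f := by
  induction xs generalizing r with
  | nil => simp
  | cons x xs ih =>
    rcases r with _ | r
    · simp [List.flatMap_cons]
    · have h2 : 2 * (r + 1) = (2 * r) + 1 + 1 := by ring
      simp only [List.flatMap_cons]
      rw [h2]
      show (f x :: g x :: (xs.flatMap fun a => [f a, g a]))[2 * r + 1 + 1]? = _
      rw [List.getElem?_cons_succ, List.getElem?_cons_succ, ih, List.getElem?_cons_succ]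

lemma flat2_get_odd {α : Type*} (f g : α → Col) (xs : List α) (r : ℕ) :
    (xs.flatMap fun a => [f a, g a])[2 * r + 1]? = (xs[r]?).map g := by
  induction xs generalizing r with
  | nil => simp
  | cons x xs ih =>
    rcases r with _ | r
    · simp [List.flatMap_cons]
    · have h2 : 2 * (r + 1) + 1 = (2 * r + 1) + 1 + 1 := by ring
      simp only [List.flatMap_cons]
      rw [h2]
      show (f x :: g x :: (xs.flatMap fun a => [f a, g a]))[2 * r + 1 + 1 + 1]? = _
      rw [List.getElem?_cons_succ, List.getElem?_cons_succ, ih, List.getElem?_cons_succ]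

lemma gadgetCols_get_even (s : List (Fin 2)) {q : ℕ} (hq : q ≤ s.length) :
    (gadgetCols s)[2 * q]? = some (2, 3, 2) := by
  unfold gadgetCols
  rcases lt_or_eq_of_le hq with h | h
  · rw [List.getElem?_append_left (by rw [length_flat2]; simp; omega)]
    rw [flat2_get_even]
    rw [List.getElem?_eq_getElem (by simp; omega)]
    rfl
  · subst h
    rw [List.getElem?_append_right (by rw [length_flat2]; simp)]
    rw [length_flat2]
    simp

lemma gadgetCols_get_odd (s : List (Fin 2)) {r : ℕ} (hr : r < s.length) :
    (gadgetCols s)[2 * r + 1]? = (s.reverse[r]?).map (fun a => ((2 : Fin 4), 3, ch a)) := by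
  unfold gadgetCols
  rw [List.getElem?_append_left (by rw [length_flat2]; simp; omega)]
  rw [flat2_get_odd]

lemma mem_gadgetCols_top {s : List (Fin 2)} {c : Col} (h : c ∈ gadgetCols s) :
    c.1 = 2 := by
  unfold gadgetCols at h
  rcases List.mem_append.mp h with h | h
  · rcases List.mem_flatMap.mp h with ⟨a, _, h⟩
    simp at h
    rcases h with h | h <;> subst h <;> rfl
  · simp at h; subst h; rfl

lemma mem_gadgetCols_mid {s : List (Fin 2)} {c : Col} (h : c ∈ gadgetCols s) :
    c.2.1 = 3 := by
  unfold gadgetCols at h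
  rcases List.mem_append.mp h with h | h
  · rcases List.mem_flatMap.mp h with ⟨a, _, h⟩
    simp at h
    rcases h with h | h <;> subst h <;> rfl
  · simp at h; subst h; rfl

lemma mem_Gcols_top {L : List (List (Fin 2))} {c : Col} (h : c ∈ Gcols L) :
    c.1 = 2 := by
  rcases List.mem_flatMap.mp h with ⟨s, _, h⟩
  rcases List.mem_append.mp h with h | h
  · exact mem_gadgetCols_top h
  · simp at h; subst h; rfl

/-- The description of the position of the gadget of `s` inside the board. -/
def offsetSpec (L : List (List (Fin 2))) (s : List (Fin 2)) (o : ℕ) : Prop :=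
  o + 2 * s.length + 2 ≤ (Gcols L).length ∧
    ∀ k, k ≤ 2 * s.length + 1 → (Gcols L)[o + k]? = (gadgetCols s ++ [sepCol])[k]?

lemma offsetSpec_cons {L : List (List (Fin 2))} {s a : List (Fin 2)} {o : ℕ}
    (h : offsetSpec L s o) :
    offsetSpec (a :: L) s (o + (2 * a.length + 2)) := by
  obtain ⟨h1, h2⟩ := h
  have hchunk : (gadgetCols a ++ [sepCol]).length = 2 * a.length + 2 := by
    simp [gadgetCols_length]
  have hG : Gcols (a :: L) = (gadgetCols a ++ [sepCol]) ++ Gcols L := by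
    simp [Gcols]
  constructor
  · rw [hG, List.length_append, hchunk]; omega
  · intro k hk
    rw [hG, List.getElem?_append_right (by omega)]
    rw [hchunk]
    have : o + (2 * a.length + 2) + k - (2 * a.length + 2) = o + k := by omega
    rw [this]
    exact h2 k hk

lemma exists_offset {L : List (List (Fin 2))} {s : List (Fin 2)} (h : s ∈ L) :
    ∃ o, offsetSpec L s o := by
  induction L with
  | nil => simp at h
  | cons a L ih =>
    rcases List.mem_cons.mp h with rfl | h
    · refine ⟨0, ?_, ?_⟩
      · have hG : Gcols (s :: L) = (gadgetCols s ++ [sepCol]) ++ Gcols L := by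
          simp [Gcols]
        rw [hG, List.length_append]
        simp [gadgetCols_length]
      · intro k hk
        have hG : Gcols (s :: L) = (gadgetCols s ++ [sepCol]) ++ Gcols L := by
          simp [Gcols]
        rw [hG, zero_add, List.getElem?_append_left (by simp [gadgetCols_length]; omega)]
    · obtain ⟨o, ho⟩ := ih h
      exact ⟨o + (2 * a.length + 2), offsetSpec_cons ho⟩

lemma cover_gadget {L : List (List (Fin 2))} {j : ℕ} (h : j < (Gcols L).length) :
    ∃ s ∈ L, ∃ o k, offsetSpec L s o ∧ j = o + k ∧ k ≤ 2 * s.length + 1 := by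
  induction L generalizing j with
  | nil => simp [Gcols] at h
  | cons a L ih =>
    have hG : Gcols (a :: L) = (gadgetCols a ++ [sepCol]) ++ Gcols L := by
      simp [Gcols]
    have hchunk : (gadgetCols a ++ [sepCol]).length = 2 * a.length + 2 := by
      simp [gadgetCols_length]
    by_cases hj : j < 2 * a.length + 2
    · refine ⟨a, by simp, 0, j, ?_, by omega, by omega⟩
      constructor
      · rw [hG, List.length_append, hchunk]; omega
      · intro k hk
        rw [hG, zero_add, List.getElem?_append_left (by omega)]
    · have hj2 : j - (2 * a.length + 2) < (Gcols L).length := by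
        rw [hG, List.length_append, hchunk] at h; omega
      obtain ⟨s, hs, o, k, hspec, hjk, hk⟩ := ih hj2
      exact ⟨s, by simp [hs], o + (2 * a.length + 2), k, offsetSpec_cons hspec,
        by omega, hk⟩

lemma Gcols_cons (a : List (Fin 2)) (L : List (List (Fin 2))) :
    Gcols (a :: L) = (gadgetCols a ++ [sepCol]) ++ Gcols L := by
  simp [Gcols]

lemma Gcols_cons_length (a : List (Fin 2)) (L : List (List (Fin 2))) :
    (Gcols (a :: L)).length = (2 * a.length + 2) + (Gcols L).length := by
  rw [Gcols_cons, List.length_append, List.length_append, gadgetCols_length]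
  simp

lemma Gcols_last {L : List (List (Fin 2))} (h : L ≠ []) :
    (Gcols L)[(Gcols L).length - 1]? = some sepCol := by
  induction L with
  | nil => simp at h
  | cons a L ih =>
    rcases eq_or_ne L [] with rfl | hL
    · have hG : Gcols [a] = gadgetCols a ++ [sepCol] := by simp [Gcols]
      rw [hG]
      have hlen : (gadgetCols a ++ [sepCol]).length - 1 = (gadgetCols a).length := by
        simp
      rw [hlen, List.getElem?_append_right (le_refl _)]
      simp
    · have hGL : 0 < (Gcols L).length := by
        rcases L with _ | ⟨b, L⟩
        · simp at hL
        · rw [Gcols_cons_length]; omega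
      rw [Gcols_cons, List.length_append]
      have hidx : (gadgetCols a ++ [sepCol]).length + (Gcols L).length - 1 =
          (gadgetCols a ++ [sepCol]).length + ((Gcols L).length - 1) := by omega
      rw [hidx, List.getElem?_append_right (by omega)]
      have h2 : (gadgetCols a ++ [sepCol]).length + ((Gcols L).length - 1) -
          (gadgetCols a ++ [sepCol]).length = (Gcols L).length - 1 := by omega
      rw [h2]
      exact ih hL

lemma bc_left {L : List (List (Fin 2))} {l : ℕ} {j : ℕ} (h : j < (Gcols L).length) :
    (boardCols L l)[j]? = (Gcols L)[j]? := by
  rw [boardCols_eq, List.getElem?_append_left h]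

lemma bc_right (L : List (List (Fin 2))) (l : ℕ) (j : ℕ) :
    (boardCols L l)[(Gcols L).length + j]? = (rCols l)[j]? := by
  rw [boardCols_eq, List.getElem?_append_right (by omega)]
  congr 1
  omega

/-- Compute the board colouring from a `getElem?` fact about the columns. -/
lemma colour_eq {L : List (List (Fin 2))} {l : ℕ} (r : Fin 3) {j : ℕ}
    (h : j < (boardCols L l).length) {v : Col}
    (hv : (boardCols L l)[j]? = some v) :
    boardColouring L l (r, ⟨j, h⟩) = sel r v := by
  rw [boardColouring_eq]
  have h2 : (boardCols L l)[j] = v := by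
    have h3 := (List.getElem?_eq_getElem h).symm.trans hv
    exact Option.some.inj h3
  show sel r ((boardCols L l).get ⟨j, h⟩) = sel r v
  rw [List.get_eq_getElem, h2]

end FloodProof
namespace FloodProof
open Flood FloodBoard

lemma adj_right {k n : ℕ} {r : Fin k} {j j' : Fin n} (h : (j : ℕ) + 1 = (j' : ℕ)) :
    (gridGraph k n).Adj (r, j) (r, j') := by
  rw [gridGraph, SimpleGraph.fromRel_adj]
  refine ⟨?_, Or.inl (Or.inl ⟨rfl, h⟩)⟩
  intro hc
  have : (j : ℕ) = (j' : ℕ) := by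
    have := congrArg Prod.snd hc
    exact congrArg Fin.val this
  omega

lemma adj_down {k n : ℕ} {r r' : Fin k} {j : Fin n} (h : (r : ℕ) + 1 = (r' : ℕ)) :
    (gridGraph k n).Adj (r, j) (r', j) := by
  rw [gridGraph, SimpleGraph.fromRel_adj]
  refine ⟨?_, Or.inl (Or.inr ⟨rfl, h⟩)⟩
  intro hc
  have : (r : ℕ) = (r' : ℕ) := by
    have := congrArg Prod.fst hc
    exact congrArg Fin.val this
  omega

section Chains

variable (L : List (List (Fin 2))) (l : ℕ)

/-- The one-step relation for reach chains of colour `d` on the board. -/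
def RelB (d : Fin 4) (a b : Fin 3 × Fin (boardCols L l).length) : Prop :=
  (gridGraph 3 (boardCols L l).length).Adj a b ∧ boardColouring L l b = d

def memAt (S : Set (Fin 3 × Fin (boardCols L l).length)) (r : Fin 3) (j : ℕ) : Prop :=
  ∀ h : j < (boardCols L l).length, (r, ⟨j, h⟩) ∈ S

def colIn (S : Set (Fin 3 × Fin (boardCols L l).length)) (j : ℕ) : Prop :=
  ∀ r, memAt L l S r j

variable {L l}

lemma memAt_mono {S S' : Set (Fin 3 × Fin (boardCols L l).length)} (h : S ⊆ S')
    {r : Fin 3} {j : ℕ} (hm : memAt L l S r j) : memAt L l S' r j :=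
  fun hN => h (hm hN)

lemma colIn_mono {S S' : Set (Fin 3 × Fin (boardCols L l).length)} (h : S ⊆ S')
    {j : ℕ} (hm : colIn L l S j) : colIn L l S' j :=
  fun r => memAt_mono h (hm r)

lemma rel_right {d : Fin 4} {r : Fin 3} {j j' : Fin (boardCols L l).length}
    (h : (j : ℕ) + 1 = (j' : ℕ)) (hc : boardColouring L l (r, j') = d) :
    RelB L l d (r, j) (r, j') := ⟨adj_right h, hc⟩

lemma rel_left {d : Fin 4} {r : Fin 3} {j j' : Fin (boardCols L l).length}
    (h : (j : ℕ) + 1 = (j' : ℕ)) (hc : boardColouring L l (r, j) = d) :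
    RelB L l d (r, j') (r, j) := ⟨(adj_right h).symm, hc⟩

lemma rel_down {d : Fin 4} {r r' : Fin 3} {j : Fin (boardCols L l).length}
    (h : (r : ℕ) + 1 = (r' : ℕ)) (hc : boardColouring L l (r', j) = d) :
    RelB L l d (r, j) (r', j) := ⟨adj_down h, hc⟩

lemma rel_up {d : Fin 4} {r r' : Fin 3} {j : Fin (boardCols L l).length}
    (h : (r : ℕ) + 1 = (r' : ℕ)) (hc : boardColouring L l (r, j) = d) :
    RelB L l d (r', j) (r, j) := ⟨(adj_down h).symm, hc⟩

lemma chain_right (d : Fin 4) (r : Fin 3) (j c : ℕ) (h : j + c < (boardCols L l).length)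
    (hcol : ∀ k, j < k → k ≤ j + c → ∀ hkN : k < (boardCols L l).length,
      boardColouring L l (r, ⟨k, hkN⟩) = d) :
    Relation.ReflTransGen (RelB L l d) (r, ⟨j, by omega⟩) (r, ⟨j + c, h⟩) := by
  induction c with
  | zero => exact Relation.ReflTransGen.refl
  | succ c ih =>
    have h' : j + c < (boardCols L l).length := by omega
    refine (ih h' (fun k hk1 hk2 hkN => hcol k hk1 (by omega) hkN)).tail ?_
    exact ⟨adj_right rfl, hcol (j + c + 1) (by omega) (by omega) h⟩

lemma chain_left (d : Fin 4) (r : Fin 3) (j c : ℕ) (h : j + c < (boardCols L l).length)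
    (hcol : ∀ k, j ≤ k → k < j + c → ∀ hkN : k < (boardCols L l).length,
      boardColouring L l (r, ⟨k, hkN⟩) = d) :
    Relation.ReflTransGen (RelB L l d) (r, ⟨j + c, h⟩) (r, ⟨j, by omega⟩) := by
  induction c with
  | zero => exact Relation.ReflTransGen.refl
  | succ c ih =>
    have h' : j + c < (boardCols L l).length := by omega
    refine Relation.ReflTransGen.head
      (⟨(adj_right (j := (⟨j + c, h'⟩ : Fin _)) rfl).symm,
        hcol (j + c) (by omega) (by omega) h'⟩) ?_
    exact ih h' (fun k hk1 hk2 hkN => hcol k hk1 (by omega) hkN)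

lemma vert_chain (d : Fin 4) (j : Fin (boardCols L l).length)
    (hc : ∀ r : Fin 3, boardColouring L l (r, j) = d) (r r' : Fin 3) :
    Relation.ReflTransGen (RelB L l d) (r, j) (r', j) := by
  have s01 : RelB L l d (0, j) (1, j) := rel_down rfl (hc 1)
  have s12 : RelB L l d (1, j) (2, j) := rel_down rfl (hc 2)
  have s10 : RelB L l d (1, j) (0, j) := rel_up rfl (hc 0)
  have s21 : RelB L l d (2, j) (1, j) := rel_up rfl (hc 1)
  fin_cases r <;> fin_cases r'
  · exact Relation.ReflTransGen.refl
  · exact Relation.ReflTransGen.single s01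
  · exact (Relation.ReflTransGen.single s01).tail s12
  · exact Relation.ReflTransGen.single s10
  · exact Relation.ReflTransGen.refl
  · exact Relation.ReflTransGen.single s12
  · exact (Relation.ReflTransGen.single s21).tail s10
  · exact Relation.ReflTransGen.single s21
  · exact Relation.ReflTransGen.refl

/-- Column values inside a gadget. -/
lemma board_get_gadget {s : List (Fin 2)} {o : ℕ} (hspec : offsetSpec L s o)
    {k : ℕ} (hk : k ≤ 2 * s.length) :
    (boardCols L l)[o + k]? = (gadgetCols s)[k]? := by
  have h1 : o + k < (Gcols L).length := by
    have := hspec.1; omega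
  rw [bc_left h1, hspec.2 k (by omega),
    List.getElem?_append_left (by rw [gadgetCols_length]; omega)]

lemma board_get_sep {s : List (Fin 2)} {o : ℕ} (hspec : offsetSpec L s o) :
    (boardCols L l)[o + (2 * s.length + 1)]? = some sepCol := by
  have h1 : o + (2 * s.length + 1) < (Gcols L).length := by
    have := hspec.1; omega
  rw [bc_left h1, hspec.2 (2 * s.length + 1) le_rfl,
    List.getElem?_append_right (by rw [gadgetCols_length])]
  rw [gadgetCols_length]
  simp

end Chains

end FloodProof
namespace FloodProof
open Flood FloodBoard

def chomp (x : Fin 2) : List (Fin 2) → List (Fin 2)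
  | [] => []
  | c :: r => if c = x then r else c :: r

lemma foldl_chomp_nil (u : List (Fin 2)) :
    u.foldl (fun r x => chomp x r) [] = [] := by
  induction u with
  | nil => rfl
  | cons x u ih => simpa [chomp] using ih

lemma chomp_foldl_nil : ∀ (u s : List (Fin 2)), s.Sublist u →
    u.foldl (fun r x => chomp x r) s = [] := by
  intro u
  induction u with
  | nil =>
    intro s hs
    simpa using List.sublist_nil.mp hs
  | cons x u ih =>
    intro s hs
    cases s with
    | nil => simpa [chomp] using foldl_chomp_nil u
    | cons c s' =>
      cases hs with
      | cons _ h' =>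
        show u.foldl (fun r x => chomp x r) (chomp x (c :: s')) = []
        by_cases hcx : c = x
        · subst hcx
          simp only [chomp, if_pos rfl]
          exact ih s' (List.sublist_of_cons_sublist h')
        · simp only [chomp, if_neg hcx]
          exact ih (c :: s') h'
      | cons_cons _ h' =>
        show u.foldl (fun r x => chomp x r) (chomp x (x :: s')) = []
        simp only [chomp, if_pos rfl]
        exact ih s' h'

@[simp] lemma chomp_nil (x : Fin 2) : chomp x [] = [] := rfl

lemma chomp_cons (x c : Fin 2) (r : List (Fin 2)) :
    chomp x (c :: r) = if c = x then r else c :: r := rfl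

lemma sel_const (r : Fin 3) (x : Fin 4) : sel r (x, x, x) = x := by
  unfold sel
  split
  · rfl
  · split <;> rfl

section Pairs

variable (L : List (List (Fin 2))) (l : ℕ)

/-- One reach step on the board. -/
def StB (d : Fin 4) (S : Set (Fin 3 × Fin (boardCols L l).length)) :
    Set (Fin 3 × Fin (boardCols L l).length) :=
  reach (gridGraph 3 (boardCols L l).length) (boardColouring L l) d S

/-- The reach sets produced by the moves `a₁ 3 a₂ 3 …` (in internal colours
`ch a₁, 2, ch a₂, 2, …`). -/
def pairsFold (u : List (Fin 2)) (S : Set (Fin 3 × Fin (boardCols L l).length)) :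
    Set (Fin 3 × Fin (boardCols L l).length) :=
  (u.flatMap fun a => [ch a, (2 : Fin 4)]).foldl (fun S d => StB L l d S) S

lemma pairsFold_cons (a : Fin 2) (u : List (Fin 2)) (S) :
    pairsFold L l (a :: u) S = pairsFold L l u (StB L l 2 (StB L l (ch a) S)) := rfl

lemma subset_pairsFold (u : List (Fin 2)) (S) : S ⊆ pairsFold L l u S :=
  subset_foldl_reach _ _ S _

variable {L l}

lemma subset_StB (d : Fin 4) (S) : S ⊆ StB L l d S := subset_reach _ _ d S

lemma mem_StB_of_chain {d : Fin 4} {S} {u v : Fin 3 × Fin (boardCols L l).length}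
    (hu : u ∈ S) (hc : Relation.ReflTransGen (RelB L l d) u v) : v ∈ StB L l d S :=
  ⟨u, hu, hc⟩

lemma ch_zero : ch 0 = 0 := rfl
lemma ch_one : ch 1 = 1 := rfl

/-- Invariant for the rectangle `R`: each pair of moves absorbs one full
colour-3 column of `R`. -/
lemma pairsR (u : List (Fin 2)) : ∀ (i : ℕ), i + u.length = l →
    ∀ S : Set (Fin 3 × Fin (boardCols L l).length),
    ((0 < (Gcols L).length + 2 * i ∧ colIn L l S ((Gcols L).length + 2 * i - 1)) ∨
      memAt L l S 0 ((Gcols L).length + 2 * i)) →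
    ∀ j, i ≤ j → j < l → colIn L l (pairsFold L l u S) ((Gcols L).length + 2 * j + 1) := by
  have hN := boardCols_length L l
  induction u with
  | nil =>
    intro i hil S anchor j hij hjl
    simp only [List.length_nil] at hil
    omega
  | cons a u ih =>
    intro i hil S anchor j hij hjl
    simp only [List.length_cons] at hil
    have hi : i < l := by omega
    have hCb : (Gcols L).length + 2 * i < (boardCols L l).length := by omega
    have hSb : (Gcols L).length + 2 * i + 1 < (boardCols L l).length := by omega
    have hCv : (boardCols L l)[(Gcols L).length + 2 * i]? = some (0, 1, 0) := by
      rw [bc_right]; exact rCols_get_C hi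
    have hSv : (boardCols L l)[(Gcols L).length + 2 * i + 1]? = some (2, 2, 2) := by
      rw [show (Gcols L).length + 2 * i + 1 = (Gcols L).length + (2 * i + 1) by omega,
        bc_right]
      exact rCols_get_S hi
    -- After the move `ch a`, some cell of the choice column is reached.
    have hmid : ∃ rw : Fin 3,
        ((rw, ⟨(Gcols L).length + 2 * i, hCb⟩) :
          Fin 3 × Fin (boardCols L l).length) ∈ StB L l (ch a) S := by
      rcases anchor with ⟨hpos, hcol⟩ | hmem
      · have hCb' : (Gcols L).length + 2 * i - 1 < (boardCols L l).length := by omega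
        fin_cases a
        · refine ⟨0, mem_StB_of_chain (hcol 0 hCb') (Relation.ReflTransGen.single
            (rel_right (by simp; omega) ?_))⟩
          rw [colour_eq 0 hCb hCv]; rfl
        · refine ⟨1, mem_StB_of_chain (hcol 1 hCb') (Relation.ReflTransGen.single
            (rel_right (by simp; omega) ?_))⟩
          rw [colour_eq 1 hCb hCv]; rfl
      · fin_cases a
        · exact ⟨0, subset_StB _ _ (hmem hCb)⟩
        · refine ⟨1, mem_StB_of_chain (hmem hCb) (Relation.ReflTransGen.single
            (rel_down rfl ?_))⟩
          rw [colour_eq 1 hCb hCv]; rfl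
    -- After the following move `2`, the whole next colour-3 column is reached.
    have hS1 : colIn L l (StB L l 2 (StB L l (ch a) S)) ((Gcols L).length + 2 * i + 1) := by
      obtain ⟨rw, hrw⟩ := hmid
      intro r h'
      have hstep : RelB L l 2 (rw, ⟨(Gcols L).length + 2 * i, hCb⟩)
          (rw, ⟨(Gcols L).length + 2 * i + 1, hSb⟩) :=
        rel_right rfl (by rw [colour_eq rw hSb hSv]; exact sel_const rw 2)
      refine mem_StB_of_chain hrw ((Relation.ReflTransGen.single hstep).trans ?_)
      exact vert_chain 2 ⟨(Gcols L).length + 2 * i + 1, hSb⟩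
        (fun r' => by rw [colour_eq r' hSb hSv]; exact sel_const r' 2) rw r
    rw [pairsFold_cons]
    rcases Nat.eq_or_lt_of_le hij with rfl | hij'
    · exact colIn_mono (subset_pairsFold L l u _) hS1
    · refine ih (i + 1) (by omega) _ (Or.inl ⟨by omega, ?_⟩) j (by omega) hjl
      have he : (Gcols L).length + 2 * (i + 1) - 1 = (Gcols L).length + 2 * i + 1 := by
        omega
      rw [he]
      exact hS1

/-- Invariant for a gadget: the moves absorb the bottom row from the right,
following the matched characters. -/
lemma pairsG {s : List (Fin 2)} {o : ℕ} (hspec : offsetSpec L s o) :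
    ∀ (u rem pre : List (Fin 2)), s = pre ++ rem →
    ∀ S : Set (Fin 3 × Fin (boardCols L l).length),
    (∀ c, 2 * rem.length ≤ c → c ≤ 2 * s.length → memAt L l S 2 (o + c)) →
    ∀ c, 2 * (u.foldl (fun r x => chomp x r) rem).length ≤ c → c ≤ 2 * s.length →
      memAt L l (pairsFold L l u S) 2 (o + c) := by
  have hN := boardCols_length L l
  intro u
  induction u with
  | nil =>
    intro rem pre hpre S hbot c h1 h2
    exact hbot c h1 h2
  | cons x u ih =>
    intro rem pre hpre S hbot c h1 h2
    rw [pairsFold_cons]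
    cases rem with
    | nil =>
      refine ih [] pre hpre _ (fun c h1 h2 => ?_) c ?_ h2
      · exact memAt_mono (subset_StB 2 _) (memAt_mono (subset_StB (ch x) _) (hbot c h1 h2))
      · simpa [chomp] using h1
    | cons cc r' =>
      have hlen : s.length = pre.length + (r'.length + 1) := by
        rw [hpre]; simp
      have hsp := hspec.1
      by_cases hcx : cc = x
      · subst hcx
        -- the next character is matched: two more bottom cells are absorbed
        have hq : 2 * r'.length + 2 ≤ 2 * s.length := by omega
        have hb1 : o + (2 * r'.length + 1) < (boardCols L l).length := by
          have := hspec.1; omega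
        have hb0 : o + 2 * r'.length < (boardCols L l).length := by
          have := hspec.1; omega
        have hvOdd : (boardCols L l)[o + (2 * r'.length + 1)]? =
            some (2, 3, ch cc) := by
          rw [board_get_gadget hspec (by omega : 2 * r'.length + 1 ≤ 2 * s.length)]
          rw [gadgetCols_get_odd s (by omega : r'.length < s.length)]
          have hrev : (s.reverse)[r'.length]? = some cc := by
            rw [hpre, List.reverse_append, List.reverse_cons, List.append_assoc,
              List.getElem?_append_right (by simp)]
            simp
          rw [hrev]
          rfl
        have hvEven : (boardCols L l)[o + 2 * r'.length]? = some (2, 3, 2) := by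
          rw [board_get_gadget hspec (by omega : 2 * r'.length ≤ 2 * s.length)]
          exact gadgetCols_get_even s (by omega)
        have hOdd : memAt L l (StB L l (ch cc) S) 2 (o + (2 * r'.length + 1)) := by
          intro h
          refine mem_StB_of_chain (hbot (2 * r'.length + 2) (by simp; omega) hq
            (by omega)) (Relation.ReflTransGen.single (rel_left (by simp; omega) ?_))
          rw [colour_eq 2 hb1 hvOdd]; rfl
        have hEven : memAt L l (StB L l 2 (StB L l (ch cc) S)) 2 (o + 2 * r'.length) := by
          intro h
          refine mem_StB_of_chain (hOdd hb1) (Relation.ReflTransGen.single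
            (rel_left (by simp; omega) ?_))
          rw [colour_eq 2 hb0 hvEven]; rfl
        refine ih r' (pre ++ [cc]) (by rw [hpre]; simp) _ (fun c h1 h2 => ?_) c ?_ h2
        · by_cases hc0 : c = 2 * r'.length
          · subst hc0; exact hEven
          · by_cases hc1 : c = 2 * r'.length + 1
            · subst hc1; exact memAt_mono (subset_StB 2 _) hOdd
            · exact memAt_mono (subset_StB 2 _) (memAt_mono (subset_StB (ch cc) _)
                (hbot c (by simp; omega) h2))
        · simpa [List.foldl_cons, chomp_cons] using h1
      · refine ih (cc :: r') pre hpre _ (fun c h1 h2 => ?_) c ?_ h2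
        · exact memAt_mono (subset_StB 2 _) (memAt_mono (subset_StB (ch x) _)
            (hbot c h1 h2))
        · simpa [List.foldl_cons, chomp_cons, hcx] using h1

end Pairs

end FloodProof
namespace FloodProof
open Flood FloodBoard

section Endgame

variable {L : List (List (Fin 2))} {l : ℕ}

lemma cellcast {S : Set (Fin 3 × Fin (boardCols L l).length)} {r : Fin 3} {j j' : ℕ}
    (h : j = j') {hj : j < (boardCols L l).length} {hj' : j' < (boardCols L l).length}
    (hm : (r, ⟨j, hj⟩) ∈ S) : (r, ⟨j', hj'⟩) ∈ S := by
  subst h; exact hm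

lemma memAt_cast {S : Set (Fin 3 × Fin (boardCols L l).length)} {r : Fin 3} {j j' : ℕ}
    (h : j = j') (hm : memAt L l S r j) : memAt L l S r j' := by
  subst h; exact hm

lemma colIn_cast {S : Set (Fin 3 × Fin (boardCols L l).length)} {j j' : ℕ}
    (h : j = j') (hm : colIn L l S j) : colIn L l S j' := by
  subst h; exact hm

lemma Gcols_pos (hL : L ≠ []) : 0 < (Gcols L).length := by
  rcases L with _ | ⟨a, L⟩
  · simp at hL
  · rw [Gcols_cons_length]; omega

lemma board_top2 {j : ℕ} (hj : j < (Gcols L).length)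
    (h : j < (boardCols L l).length) : boardColouring L l (0, ⟨j, h⟩) = 2 := by
  have hv : (boardCols L l)[j]? = some ((Gcols L)[j]'hj) := by
    rw [bc_left hj]
    exact List.getElem?_eq_getElem hj
  rw [colour_eq 0 h hv]
  exact mem_Gcols_top (List.getElem_mem hj)

lemma topLeft_colour (hL : L ≠ []) : boardColouring L l (topLeft L l) = 2 := by
  have h0 : (0 : ℕ) < (boardCols L l).length := boardCols_pos L l
  have := board_top2 (L := L) (l := l) (Gcols_pos hL) h0
  exact this

/-- Chain of colour 2 from the top-left square along the top row of the
gadget region. -/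
lemma base_chain_top (hL : L ≠ []) {j : ℕ} (hj : j < (Gcols L).length)
    (h : j < (boardCols L l).length) :
    Relation.ReflTransGen (RelB L l 2) (topLeft L l) (0, ⟨j, h⟩) := by
  have h0 : (0 : ℕ) + j < (boardCols L l).length := by omega
  have hchain := chain_right (L := L) (l := l) 2 0 0 j h0
    (fun k hk1 hk2 hkN => board_top2 (by omega) hkN)
  have he : ((⟨0 + j, h0⟩ : Fin (boardCols L l).length)) = ⟨j, h⟩ := by
    apply Fin.ext; simp
  rw [he] at hchain
  exact hchain

lemma sep_colour {s : List (Fin 2)} {o : ℕ} (hspec : offsetSpec L s o) (r : Fin 3)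
    (h : o + (2 * s.length + 1) < (boardCols L l).length) :
    boardColouring L l (r, ⟨o + (2 * s.length + 1), h⟩) = 2 := by
  rw [colour_eq r h (board_get_sep hspec)]
  exact sel_const r 2

lemma base_sep (hL : L ≠ []) {s : List (Fin 2)} {o : ℕ} (hspec : offsetSpec L s o) :
    colIn L l (StB L l 2 {topLeft L l}) (o + (2 * s.length + 1)) := by
  intro r h
  have hjg : o + (2 * s.length + 1) < (Gcols L).length := by have := hspec.1; omega
  refine mem_StB_of_chain (Set.mem_singleton _)
    ((base_chain_top hL hjg h).trans ?_)
  exact vert_chain 2 ⟨o + (2 * s.length + 1), h⟩ (fun r' => sep_colour hspec r' h) 0 r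

lemma base_gadget_bottom (hL : L ≠ []) {s : List (Fin 2)} {o : ℕ}
    (hspec : offsetSpec L s o) : memAt L l (StB L l 2 {topLeft L l}) 2 (o + 2 * s.length) := by
  intro h
  have hsp := hspec.1
  have hN := boardCols_length L l
  have hsepb : o + (2 * s.length + 1) < (boardCols L l).length := by omega
  have hjg : o + (2 * s.length + 1) < (Gcols L).length := by omega
  have hvE : (boardCols L l)[o + 2 * s.length]? = some (2, 3, 2) := by
    rw [board_get_gadget hspec (le_refl _)]
    exact gadgetCols_get_even s (le_refl _)
  refine mem_StB_of_chain (Set.mem_singleton _)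
    (((base_chain_top hL hjg hsepb).trans
      (vert_chain 2 ⟨o + (2 * s.length + 1), hsepb⟩
        (fun r' => sep_colour hspec r' hsepb) 0 2)).tail ?_)
  refine rel_left (by simp; omega) ?_
  rw [colour_eq 2 h hvE]; rfl

lemma base_col (hL : L ≠ []) : colIn L l (StB L l 2 {topLeft L l}) ((Gcols L).length - 1) := by
  intro r h
  have hg := Gcols_pos (L := L) hL
  have hjg : (Gcols L).length - 1 < (Gcols L).length := by omega
  have hv : (boardCols L l)[(Gcols L).length - 1]? = some sepCol := by
    rw [bc_left hjg]
    exact Gcols_last hL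
  refine mem_StB_of_chain (Set.mem_singleton _)
    ((base_chain_top hL hjg h).trans ?_)
  exact vert_chain 2 ⟨(Gcols L).length - 1, h⟩
    (fun r' => by rw [colour_eq r' h hv]; exact sel_const r' 2) 0 r

lemma gadget_colour_mid {s : List (Fin 2)} {o : ℕ} (hspec : offsetSpec L s o)
    {k : ℕ} (hk : k ≤ 2 * s.length) (h : o + k < (boardCols L l).length) :
    boardColouring L l (1, ⟨o + k, h⟩) = 3 := by
  have hkg : k < (gadgetCols s).length := by rw [gadgetCols_length]; omega
  have hv : (boardCols L l)[o + k]? = some ((gadgetCols s)[k]'hkg) := by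
    rw [board_get_gadget hspec hk]
    exact List.getElem?_eq_getElem hkg
  rw [colour_eq 1 h hv]
  exact mem_gadgetCols_mid (List.getElem_mem hkg)

/-- After the move 4 (colour 3), the middle rows of the gadgets are absorbed. -/
lemma end_mid {S : Set (Fin 3 × Fin (boardCols L l).length)} {s : List (Fin 2)} {o : ℕ}
    (hspec : offsetSpec L s o) (hsep : memAt L l S 1 (o + (2 * s.length + 1)))
    {k : ℕ} (hk : k ≤ 2 * s.length) : memAt L l (StB L l 3 S) 1 (o + k) := by
  intro h
  have hsp := hspec.1
  have hN := boardCols_length L l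
  have hsepb : o + (2 * s.length + 1) < (boardCols L l).length := by omega
  have hc : (o + k) + (2 * s.length + 1 - k) < (boardCols L l).length := by omega
  have hchain := chain_left (L := L) (l := l) 3 1 (o + k) (2 * s.length + 1 - k) hc
    (fun k' hk1 hk2 hkN => by
      obtain ⟨k'', rfl⟩ : ∃ k'', k' = o + k'' := ⟨k' - o, by omega⟩
      exact gadget_colour_mid hspec (by omega) hkN)
  have he : ((⟨o + k + (2 * s.length + 1 - k), hc⟩ : Fin (boardCols L l).length)) =
      ⟨o + (2 * s.length + 1), hsepb⟩ := by
    apply Fin.ext; simp; omega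
  rw [he] at hchain
  exact mem_StB_of_chain (hsep hsepb) hchain

/-- After the move 4 the colour-4 column of `R` is absorbed. -/
lemma end_3col {S : Set (Fin 3 × Fin (boardCols L l).length)}
    (anchor : (0 < (Gcols L).length + 2 * l ∧ colIn L l S ((Gcols L).length + 2 * l - 1)) ∨
      memAt L l S 0 ((Gcols L).length + 2 * l)) :
    colIn L l (StB L l 3 S) ((Gcols L).length + 2 * l) := by
  have hN := boardCols_length L l
  have hb : (Gcols L).length + 2 * l < (boardCols L l).length := by omega
  have hv : (boardCols L l)[(Gcols L).length + 2 * l]? = some (3, 3, 3) := by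
    rw [bc_right]; exact rCols_get_3 l
  have hcol : ∀ r' : Fin 3,
      boardColouring L l (r', ⟨(Gcols L).length + 2 * l, hb⟩) = 3 := fun r' => by
    rw [colour_eq r' hb hv]; exact sel_const r' 3
  intro r h
  rcases anchor with ⟨hpos, hc⟩ | hm
  · have hb' : (Gcols L).length + 2 * l - 1 < (boardCols L l).length := by omega
    refine mem_StB_of_chain (hc r hb') (Relation.ReflTransGen.single
      (rel_right (by simp; omega) ?_))
    exact hcol r
  · exact mem_StB_of_chain (hm hb) (vert_chain 3 ⟨(Gcols L).length + 2 * l, hb⟩ hcol 0 r)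

/-- After the move 2 (colour 1) the colour-2 column of `R` is absorbed. -/
lemma end_1col {S : Set (Fin 3 × Fin (boardCols L l).length)}
    (h3 : colIn L l S ((Gcols L).length + 2 * l)) :
    colIn L l (StB L l 1 S) ((Gcols L).length + 2 * l + 1) := by
  have hN := boardCols_length L l
  have hb : (Gcols L).length + 2 * l < (boardCols L l).length := by omega
  have hv : (boardCols L l)[(Gcols L).length + 2 * l + 1]? = some (1, 1, 1) := by
    rw [show (Gcols L).length + 2 * l + 1 = (Gcols L).length + (2 * l + 1) by omega,
      bc_right]
    exact rCols_get_1 l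
  intro r h
  refine mem_StB_of_chain (h3 r hb) (Relation.ReflTransGen.single
    (rel_right (by simp) ?_))
  rw [colour_eq r h hv]; exact sel_const r 1

/-- After the move 2 (colour 1) the middle squares of the choice columns are
absorbed. -/
lemma end_Cmid {S : Set (Fin 3 × Fin (boardCols L l).length)}
    (hSi : ∀ i, i < l → colIn L l S ((Gcols L).length + 2 * i + 1))
    (hbase : (0 < (Gcols L).length ∧ colIn L l S ((Gcols L).length - 1)) ∨
      memAt L l S 0 (Gcols L).length)
    {i : ℕ} (hi : i < l) : memAt L l (StB L l 1 S) 1 ((Gcols L).length + 2 * i) := by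
  have hN := boardCols_length L l
  intro h
  have hv : (boardCols L l)[(Gcols L).length + 2 * i]? = some (0, 1, 0) := by
    rw [bc_right]; exact rCols_get_C hi
  have hcol : boardColouring L l (1, ⟨(Gcols L).length + 2 * i, h⟩) = 1 := by
    rw [colour_eq 1 h hv]; rfl
  rcases Nat.eq_zero_or_pos i with rfl | hipos
  · rcases hbase with ⟨hpos, hc⟩ | hm
    · have hb' : (Gcols L).length - 1 < (boardCols L l).length := by omega
      exact mem_StB_of_chain (hc 1 hb') (Relation.ReflTransGen.single
        (rel_right (by simp; omega) hcol))
    · have hb' : (Gcols L).length < (boardCols L l).length := by omega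
      refine mem_StB_of_chain (cellcast (show (Gcols L).length = (Gcols L).length + 2 * 0
          by omega) (hm hb')) (Relation.ReflTransGen.single (rel_down rfl hcol))
  · have hb' : (Gcols L).length + 2 * (i - 1) + 1 < (boardCols L l).length := by omega
    refine mem_StB_of_chain (hSi (i - 1) (by omega) 1 hb') (Relation.ReflTransGen.single
      (rel_right (by simp; omega) hcol))

end Endgame

end FloodProof
namespace FloodProof
open Flood FloodBoard

/-- Master lemma: every cell of colour ≠ 0 is in the territory after the moves
`a₁ 3 a₂ 3 … a_l 3 4 2` (internal colours). -/
lemma master (L : List (List (Fin 2))) (l : ℕ) (t' : List (Fin 2)) (ht' : t'.length = l)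
    (hsup' : ∀ s ∈ L, s.Sublist t')
    (S0 : Set (Fin 3 × Fin (boardCols L l).length))
    (hS0T : S0 ⊆ terr (gridGraph 3 (boardCols L l).length) (boardColouring L l)
      (topLeft L l) [])
    (htop : ∀ j, j < (Gcols L).length → memAt L l S0 0 j)
    (hsep : ∀ s ∈ L, ∀ o, offsetSpec L s o → colIn L l S0 (o + (2 * s.length + 1)))
    (hgb : ∀ s ∈ L, ∀ o, offsetSpec L s o → memAt L l S0 2 (o + 2 * s.length))
    (hbase : (0 < (Gcols L).length ∧ colIn L l S0 ((Gcols L).length - 1)) ∨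
      memAt L l S0 0 (Gcols L).length) :
    ∀ u, boardColouring L l u ≠ 0 →
      u ∈ terr (gridGraph 3 (boardCols L l).length) (boardColouring L l) (topLeft L l)
        ((t'.flatMap fun a => [ch a, (2 : Fin 4)]) ++ [3, 1]) := by
  have hN := boardCols_length L l
  have hSsub : S0 ⊆ pairsFold L l t' S0 := subset_pairsFold L l t' S0
  set S := pairsFold L l t' S0 with hSdef
  have hA3sub : S ⊆ StB L l 3 S := subset_StB 3 S
  have hA31sub : StB L l 3 S ⊆ StB L l 1 (StB L l 3 S) := subset_StB 1 _
  have hA31T : StB L l 1 (StB L l 3 S) ⊆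
      terr (gridGraph 3 (boardCols L l).length) (boardColouring L l) (topLeft L l)
        ((t'.flatMap fun a => [ch a, (2 : Fin 4)]) ++ [3, 1]) := by
    have h := reach_subset_terr (gridGraph 3 (boardCols L l).length) (boardColouring L l)
      (topLeft L l) hS0T ((t'.flatMap fun a => [ch a, (2 : Fin 4)]) ++ [3, 1])
    rw [List.foldl_append] at h
    exact h
  have hbaseS : (0 < (Gcols L).length ∧ colIn L l S ((Gcols L).length - 1)) ∨
      memAt L l S 0 (Gcols L).length := by
    rcases hbase with ⟨hp, hc⟩ | hm
    · exact Or.inl ⟨hp, colIn_mono hSsub hc⟩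
    · exact Or.inr (memAt_mono hSsub hm)
  have hSi : ∀ j, j < l → colIn L l S ((Gcols L).length + 2 * j + 1) := by
    intro j hj
    refine pairsR t' 0 (by omega) S0 ?_ j (by omega) hj
    rcases hbase with ⟨hp, hc⟩ | hm
    · exact Or.inl ⟨by omega, colIn_cast (by omega) hc⟩
    · exact Or.inr (memAt_cast (by omega) hm)
  have hbotAll : ∀ s ∈ L, ∀ o, offsetSpec L s o → ∀ c, c ≤ 2 * s.length →
      memAt L l S 2 (o + c) := by
    intro s hs o hspec c hc
    have hnil : t'.foldl (fun r x => chomp x r) s = [] :=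
      chomp_foldl_nil t' s (hsup' s hs)
    refine pairsG hspec t' s [] (by simp) S0 ?_ c ?_ hc
    · intro c' h1 h2
      have hce : c' = 2 * s.length := by omega
      subst hce
      exact hgb s hs o hspec
    · rw [hnil]; simp
  have hmidAll : ∀ s ∈ L, ∀ o, offsetSpec L s o → ∀ k, k ≤ 2 * s.length →
      memAt L l (StB L l 3 S) 1 (o + k) := by
    intro s hs o hspec k hk
    exact end_mid hspec (memAt_mono hSsub (hsep s hs o hspec 1)) hk
  have h3col : colIn L l (StB L l 3 S) ((Gcols L).length + 2 * l) := by
    refine end_3col ?_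
    rcases Nat.eq_zero_or_pos l with rfl | hl
    · rcases hbaseS with ⟨hp, hc⟩ | hm
      · exact Or.inl ⟨by omega, colIn_cast (by omega) hc⟩
      · exact Or.inr (memAt_cast (by omega) hm)
    · refine Or.inl ⟨by omega, colIn_cast
        (show (Gcols L).length + 2 * (l - 1) + 1 = (Gcols L).length + 2 * l - 1 by omega)
        (hSi (l - 1) (by omega))⟩
  have h1col := end_1col h3col
  have hCmid : ∀ i, i < l →
      memAt L l (StB L l 1 (StB L l 3 S)) 1 ((Gcols L).length + 2 * i) := by
    intro i hi
    refine end_Cmid (fun i' hi' => colIn_mono hA3sub (hSi i' hi')) ?_ hi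
    rcases hbaseS with ⟨hp, hc⟩ | hm
    · exact Or.inl ⟨hp, colIn_mono hA3sub hc⟩
    · exact Or.inr (memAt_mono hA3sub hm)
  rintro ⟨r, jv, hjlt⟩ hu
  apply hA31T
  by_cases hjg : jv < (Gcols L).length
  · obtain ⟨s, hs, o, k, hspec, hjk, hk⟩ := cover_gadget hjg
    subst hjk
    fin_cases r
    · exact hA31sub (hA3sub (hSsub (htop (o + k) hjg hjlt)))
    · rcases Nat.lt_or_ge k (2 * s.length + 1) with hk' | hk'
      · exact hA31sub (hmidAll s hs o hspec k (by omega) hjlt)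
      · have hke : k = 2 * s.length + 1 := by omega
        subst hke
        exact hA31sub (hA3sub (hSsub (hsep s hs o hspec 1 hjlt)))
    · rcases Nat.lt_or_ge k (2 * s.length + 1) with hk' | hk'
      · exact hA31sub (hA3sub (hbotAll s hs o hspec k (by omega) hjlt))
      · have hke : k = 2 * s.length + 1 := by omega
        subst hke
        exact hA31sub (hA3sub (hSsub (hsep s hs o hspec 2 hjlt)))
  · rcases Nat.lt_or_ge jv ((Gcols L).length + 2 * l) with hlt | hge
    · obtain ⟨i, hi, hcase⟩ : ∃ i, i < l ∧ (jv = (Gcols L).length + 2 * i ∨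
          jv = (Gcols L).length + 2 * i + 1) :=
        ⟨(jv - (Gcols L).length) / 2, by omega, by omega⟩
      rcases hcase with rfl | rfl
      · have hv : (boardCols L l)[(Gcols L).length + 2 * i]? = some (0, 1, 0) := by
          rw [bc_right]; exact rCols_get_C hi
        fin_cases r
        · exact absurd (colour_eq 0 hjlt hv) hu
        · exact hCmid i hi hjlt
        · exact absurd (colour_eq 2 hjlt hv) hu
      · exact hA31sub (hA3sub (hSi i hi r hjlt))
    · have hcase : jv = (Gcols L).length + 2 * l ∨ jv = (Gcols L).length + 2 * l + 1 ∨
          jv = (Gcols L).length + 2 * l + 2 := by omega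
      rcases hcase with rfl | rfl | rfl
      · exact hA31sub (h3col r hjlt)
      · exact h1col r hjlt
      · exfalso
        apply hu
        have hv : (boardCols L l)[(Gcols L).length + 2 * l + 2]? = some (0, 0, 0) := by
          rw [show (Gcols L).length + 2 * l + 2 = (Gcols L).length + (2 * l + 2) by omega,
            bc_right]
          exact rCols_get_0 l
        rw [colour_eq r hjlt hv]
        exact sel_const r 0

end FloodProof

open Flood FloodBoard FloodProof in
theorem supersequence_floods_board_aux (L : List (List (Fin 2))) (l : ℕ)
    (t : List (Fin 2)) (hlen : t.length ≤ l) (hsup : ∀ s ∈ L, s.Sublist t) :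
    ∃ M : List (Fin 4), M.length ≤ 2 * l + 3 ∧
      ∀ a b : Fin 3 × Fin (boardCols L l).length,
        fixedSeq (Flood.gridGraph 3 (boardCols L l).length)
            (boardColouring L l) (topLeft L l) M a =
          fixedSeq (Flood.gridGraph 3 (boardCols L l).length)
            (boardColouring L l) (topLeft L l) M b := by
  classical
  set t' : List (Fin 2) := t ++ List.replicate (l - t.length) 0 with ht'def
  have ht'len : t'.length = l := by
    rw [ht'def, List.length_append, List.length_replicate]; omega
  have hsup' : ∀ s ∈ L, s.Sublist t' := fun s hs =>
    (hsup s hs).trans (List.sublist_append_left t _)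
  have hcov : ∀ u, boardColouring L l u ≠ 0 →
      u ∈ terr (gridGraph 3 (boardCols L l).length) (boardColouring L l) (topLeft L l)
        ((t'.flatMap fun a => [ch a, (2 : Fin 4)]) ++ [3, 1]) := by
    rcases eq_or_ne L [] with rfl | hL
    · refine master [] l t' ht'len hsup' {topLeft [] l} ?_ ?_ ?_ ?_ ?_
      · intro u hu
        rcases hu with rfl
        exact self_mem_terr _ _ _ _
      · intro j hj
        simp [Gcols] at hj
      · intro s hs; simp at hs
      · intro s hs; simp at hs
      · refine Or.inr (fun h => ?_)
        have h0 : (Gcols ([] : List (List (Fin 2)))).length = 0 := by simp [Gcols]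
        simp only [Set.mem_singleton_iff, topLeft, Prod.mk.injEq, Fin.mk.injEq]
        exact ⟨trivial, h0⟩
    · refine master L l t' ht'len hsup' (StB L l 2 {topLeft L l}) ?_ ?_ ?_ ?_ ?_
      · exact initial_reach_subset _ _ _ (topLeft_colour hL)
      · intro j hj h
        exact mem_StB_of_chain (Set.mem_singleton _) (base_chain_top hL hj h)
      · intro s hs o hspec
        exact base_sep hL hspec
      · intro s hs o hspec
        exact base_gadget_bottom hL hspec
      · exact Or.inl ⟨Gcols_pos hL, base_col hL⟩
  refine ⟨(t'.flatMap fun a => [ch a, (2 : Fin 4)]) ++ [3, 1, 0], ?_, ?_⟩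
  · rw [List.length_append]
    have hlen2 := length_flat2 (fun a : Fin 2 => ch a) (fun _ : Fin 2 => (2 : Fin 4)) t'
    rw [hlen2, ht'len]
    simp
  · have hfin := final_constant (gridGraph 3 (boardCols L l).length) (boardColouring L l)
      (topLeft L l) (z := (0 : Fin 4)) ((t'.flatMap fun a => [ch a, (2 : Fin 4)]) ++ [3, 1])
      hcov
    have hM : (t'.flatMap fun a => [ch a, (2 : Fin 4)]) ++ [3, 1, 0] =
        ((t'.flatMap fun a => [ch a, (2 : Fin 4)]) ++ [3, 1]) ++ [0] := by simp
    intro a b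
    rw [hM, hfin a, hfin b]

open Flood FloodBoard

/-- if the strings `s_1, …, s_k` over `{1,2}` have a common
supersequence of length at most `l`, then the `3 × n` board `B` built from them
(gadgets `G_i` plus terminal rectangle `R`) can be flooded, always playing at
the top-left square, in at most `2l + 3` moves (via the move sequence
`a₁ 3 a₂ 3 … a_l 3 4 2 1` for a common supersequence `a₁ … a_l`). -/
theorem supersequence_floods_board (L : List (List (Fin 2))) (l : ℕ)
    (t : List (Fin 2)) (hlen : t.length ≤ l) (hsup : ∀ s ∈ L, s.Sublist t) :
    ∃ M : List (Fin 4), M.length ≤ 2 * l + 3 ∧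
      ∀ a b : Fin 3 × Fin (boardCols L l).length,
        fixedSeq (Flood.gridGraph 3 (boardCols L l).length)
            (boardColouring L l) (topLeft L l) M a =
          fixedSeq (Flood.gridGraph 3 (boardCols L l).length)
            (boardColouring L l) (topLeft L l) M b :=
  supersequence_floods_board_aux L l t hlen hsup
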